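/- For all simple regular expressions E₁, E₂ over an alphabet α and every nonempty word w over α: ∂_w(E₁+E₂) = ∂_w(E₁) ∪ ∂_w(E₂). Consequently, the number of distinct sets ∂_w(E₁+E₂) for w ranging over nonempty words is at most the product of the number of distinct sets ∂_w(E₁) and the number of distinct sets ∂_w(E₂) (for w ranging over nonempty words). -/

import Mathlib

open scoped Classical

/-- The Antimirov partial derivative of a regular expression with respect to a symbol. -/
noncomputable def aderiv {α : Type*} (a : α) : RegularExpression α → Set (RegularExpression α)
  | .zero => ∅
  | .epsilon => ∅
  | .char b => if b = a then {1} else ∅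
  | .plus E₁ E₂ => aderiv a E₁ ∪ aderiv a E₂
  | .comp E₁ E₂ =>
      if [] ∈ E₁.matches' then ((· * E₂) '' aderiv a E₁) ∪ aderiv a E₂
      else (· * E₂) '' aderiv a E₁
  | .star E₁ => (· * E₁.star) '' aderiv a E₁

/-- Iterated Antimirov partial derivative with respect to a word. -/
noncomputable def aderivWord {α : Type*} : List α → RegularExpression α → Set (RegularExpression α)
  | [], E => {E}
  | a :: w, E => ⋃ F ∈ aderiv a E, aderivWord w F

/-- Left quotient of a language by a word. -/
def lquot {α : Type*} (w : List α) (L : Language α) : Language α := {v | w ++ v ∈ L}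

/-- The finite support of all iterated partial derivatives. -/
noncomputable def pd {α : Type*} : RegularExpression α → Set (RegularExpression α)
  | .zero => ∅
  | .epsilon => ∅
  | .char _ => {1}
  | .plus E₁ E₂ => pd E₁ ∪ pd E₂
  | .comp E₁ E₂ => ((· * E₂) '' pd E₁) ∪ pd E₂
  | .star E₁ => (· * E₁.star) '' pd E₁

lemma pd_finite {α : Type*} (E : RegularExpression α) : (pd E).Finite := by
  induction E with
  | zero => simp [pd]
  | epsilon => simp [pd]
  | char b => simp [pd]
  | plus E₁ E₂ ih₁ ih₂ => exact (ih₁.union ih₂)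
  | comp E₁ E₂ ih₁ ih₂ => exact ((ih₁.image _).union ih₂)
  | star E₁ ih₁ => exact ih₁.image _

lemma aderiv_subset_pd {α : Type*} (a : α) (E : RegularExpression α) :
    aderiv a E ⊆ pd E := by
  induction E with
  | zero => simp [aderiv, pd]
  | epsilon => simp [aderiv, pd]
  | char b => by_cases h : b = a <;> simp [aderiv, pd, h]
  | plus E₁ E₂ ih₁ ih₂ => exact Set.union_subset_union ih₁ ih₂
  | comp E₁ E₂ ih₁ ih₂ =>
      show (if [] ∈ E₁.matches' then _ else _ : Set (RegularExpression α)) ⊆ _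
      split
      · exact Set.union_subset_union (Set.image_mono ih₁) ih₂
      · exact (Set.image_mono ih₁).trans Set.subset_union_left
  | star E₁ ih₁ => exact Set.image_mono ih₁

lemma pd_closed {α : Type*} (a : α) (E : RegularExpression α) :
    ∀ G ∈ pd E, aderiv a G ⊆ pd E := by
  induction E with
  | zero => simp [pd]
  | epsilon => simp [pd]
  | char b =>
      intro G hG
      simp only [pd, Set.mem_singleton_iff] at hG
      subst hG
      show aderiv a RegularExpression.epsilon ⊆ _
      simp [aderiv]
  | plus E₁ E₂ ih₁ ih₂ =>
      rintro G (hG | hG)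
      · exact (ih₁ G hG).trans Set.subset_union_left
      · exact (ih₂ G hG).trans Set.subset_union_right
  | comp E₁ E₂ ih₁ ih₂ =>
      rintro G (⟨G', hG', rfl⟩ | hG)
      · show (if [] ∈ G'.matches' then _ else _ : Set (RegularExpression α)) ⊆ _
        split
        · exact Set.union_subset
            ((Set.image_mono (ih₁ G' hG')).trans Set.subset_union_left)
            ((aderiv_subset_pd a E₂).trans Set.subset_union_right)
        · exact (Set.image_mono (ih₁ G' hG')).trans Set.subset_union_left
      · exact (ih₂ G hG).trans Set.subset_union_right
  | star E₁ ih₁ =>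
      rintro G ⟨G', hG', rfl⟩
      show (if [] ∈ G'.matches' then _ else _ : Set (RegularExpression α)) ⊆ _
      split
      · refine Set.union_subset ((Set.image_mono (ih₁ G' hG'))) ?_
        show (· * E₁.star) '' aderiv a E₁ ⊆ _
        exact Set.image_mono (aderiv_subset_pd a E₁)
      · exact Set.image_mono (ih₁ G' hG')

lemma aderivWord_subset_pd {α : Type*} (E : RegularExpression α) (w : List α) :
    ∀ G ∈ pd E, aderivWord w G ⊆ pd E := by
  induction w with
  | nil => intro G hG; simpa [aderivWord] using hG
  | cons b w ih =>
      intro G hG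
      simp only [aderivWord]
      exact Set.iUnion₂_subset fun F hF => ih F (pd_closed b E G hG hF)

lemma aderivWord_cons_subset_pd {α : Type*} (E : RegularExpression α) (a : α) (w : List α) :
    aderivWord (a :: w) E ⊆ pd E := by
  simp only [aderivWord]
  exact Set.iUnion₂_subset fun F hF => aderivWord_subset_pd E w F (aderiv_subset_pd a E hF)

lemma dset_finite {α : Type*} (E : RegularExpression α) :
    {S | ∃ (a : α) (w : List α), S = aderivWord (a :: w) E}.Finite := by
  apply Set.Finite.subset (pd_finite E).finite_subsets
  rintro S ⟨a, w, rfl⟩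
  exact aderivWord_cons_subset_pd E a w

theorem antimirov_plus {α : Type*} (E₁ E₂ : RegularExpression α) :
    (∀ (a : α) (w : List α),
        aderivWord (a :: w) (E₁ + E₂) = aderivWord (a :: w) E₁ ∪ aderivWord (a :: w) E₂) ∧
      {S | ∃ (a : α) (w : List α), S = aderivWord (a :: w) (E₁ + E₂)}.ncard ≤
        {S | ∃ (a : α) (w : List α), S = aderivWord (a :: w) E₁}.ncard *
          {S | ∃ (a : α) (w : List α), S = aderivWord (a :: w) E₂}.ncard := by
  have hplus : ∀ (a : α) (w : List α),
      aderivWord (a :: w) (E₁ + E₂) = aderivWord (a :: w) E₁ ∪ aderivWord (a :: w) E₂ := by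
    intro a w
    show (⋃ F ∈ aderiv a (E₁ + E₂), aderivWord w F) = _
    show (⋃ F ∈ aderiv a E₁ ∪ aderiv a E₂, aderivWord w F) = _
    rw [Set.biUnion_union]
    rfl
  refine ⟨hplus, ?_⟩
  set D₁ := {S | ∃ (a : α) (w : List α), S = aderivWord (a :: w) E₁} with hD₁
  set D₂ := {S | ∃ (a : α) (w : List α), S = aderivWord (a :: w) E₂} with hD₂
  have hsub : {S | ∃ (a : α) (w : List α), S = aderivWord (a :: w) (E₁ + E₂)} ⊆
      (fun p : Set (RegularExpression α) × Set (RegularExpression α) => p.1 ∪ p.2) '' (D₁ ×ˢ D₂) := by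
    rintro S ⟨a, w, rfl⟩
    exact ⟨(aderivWord (a :: w) E₁, aderivWord (a :: w) E₂),
      ⟨⟨a, w, rfl⟩, ⟨a, w, rfl⟩⟩, (hplus a w).symm⟩
  have hfin : (D₁ ×ˢ D₂).Finite := (dset_finite E₁).prod (dset_finite E₂)
  calc _ ≤ ((fun p : Set (RegularExpression α) × Set (RegularExpression α) => p.1 ∪ p.2) ''
        (D₁ ×ˢ D₂)).ncard := Set.ncard_le_ncard hsub (hfin.image _)
    _ ≤ (D₁ ×ˢ D₂).ncard := Set.ncard_image_le hfin
    _ = D₁.ncard * D₂.ncard := by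
        rw [← Nat.card_coe_set_eq, ← Nat.card_coe_set_eq, ← Nat.card_coe_set_eq,
          Nat.card_congr (Equiv.Set.prod D₁ D₂), Nat.card_prod]
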